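/- Let n ≥ 0 and let Ψ be a set-valued sheaf on smooth n-manifolds with a topological enhancement over ℝⁿ. Topologize Ψ(M) for every smooth n-manifold M by the affine-patch construction: choose an open cover of M by affine patches with diffeomorphisms to open subsets of ℝⁿ, transport the given topologies to the patches, and give Ψ(M) the subspace topology of the product over the patches (this is independent of choices). Then for every open smooth embedding f : N → M of smooth n-manifolds, the restriction map f* : Ψ(M) → Ψ(N) is continuous; in particular, for every diffeomorphism f the map f* is a homeomorphism. (The unenriched content of Lemma 3.5 of the paper: Ψ becomes a presheaf of topological spaces on smooth n-manifolds.) -/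

import Mathlib

open scoped Manifold
open TopologicalSpace Set Topology
set_option linter.unusedSectionVars false
set_option linter.unnecessarySimpa false
set_option maxHeartbeats 1000000

noncomputable section

/-- A map `f : N → M` between smooth `n`-manifolds is an *open smooth embedding* if it is
injective and a smooth local diffeomorphism; equivalently, it is a topological open embedding
which is a diffeomorphism onto its open image. -/
def IsOpenSmoothEmbedding (n : ℕ)
    {N : Type} [TopologicalSpace N] [ChartedSpace (EuclideanSpace ℝ (Fin n)) N]
    {M : Type} [TopologicalSpace M] [ChartedSpace (EuclideanSpace ℝ (Fin n)) M]
    (f : N → M) : Prop :=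
  Function.Injective f ∧ IsLocalDiffeomorph (𝓡 n) (𝓡 n) (⊤ : ℕ∞) f

theorem IsOpenSmoothEmbedding.continuous {n : ℕ}
    {N : Type} [TopologicalSpace N] [ChartedSpace (EuclideanSpace ℝ (Fin n)) N]
    {M : Type} [TopologicalSpace M] [ChartedSpace (EuclideanSpace ℝ (Fin n)) M]
    {f : N → M} (hf : IsOpenSmoothEmbedding n f) : Continuous f :=
  hf.2.contMDiff.continuous

/-- A set-valued sheaf `Ψ` on the site of smooth `n`-manifolds (second countable, Hausdorff,
without boundary) and open smooth embeddings, presented in terms of its sections over the open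
subsets of each smooth `n`-manifold.  `sect M U` is the set `Ψ(U)` of sections over the open
subset `U ⊆ M`; `res` is restriction to a smaller open subset, `pull` is pullback along an open
smooth embedding of manifolds, and `pullD` is pullback along a (partial) diffeomorphism between
an open subset of one manifold and an open subset of another.  These operations are functorial
and satisfy the sheaf condition for arbitrary open covers. -/
structure SetSheaf (n : ℕ) : Type 1 where
  sect : ∀ (M : Type) [TopologicalSpace M] [ChartedSpace (EuclideanSpace ℝ (Fin n)) M]
      [IsManifold (𝓡 n) (⊤ : ℕ∞) M] [SecondCountableTopology M] [T2Space M],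
      Opens M → Type
  res : ∀ (M : Type) [TopologicalSpace M] [ChartedSpace (EuclideanSpace ℝ (Fin n)) M]
      [IsManifold (𝓡 n) (⊤ : ℕ∞) M] [SecondCountableTopology M] [T2Space M]
      {U V : Opens M}, V ≤ U → sect M U → sect M V
  res_id : ∀ (M : Type) [TopologicalSpace M] [ChartedSpace (EuclideanSpace ℝ (Fin n)) M]
      [IsManifold (𝓡 n) (⊤ : ℕ∞) M] [SecondCountableTopology M] [T2Space M]
      (U : Opens M) (s : sect M U), res M (le_refl U) s = s
  res_comp : ∀ (M : Type) [TopologicalSpace M] [ChartedSpace (EuclideanSpace ℝ (Fin n)) M]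
      [IsManifold (𝓡 n) (⊤ : ℕ∞) M] [SecondCountableTopology M] [T2Space M]
      {U V W : Opens M} (hVU : V ≤ U) (hWV : W ≤ V) (s : sect M U),
      res M hWV (res M hVU s) = res M (hWV.trans hVU) s
  pull : ∀ (N : Type) [TopologicalSpace N] [ChartedSpace (EuclideanSpace ℝ (Fin n)) N]
      [IsManifold (𝓡 n) (⊤ : ℕ∞) N] [SecondCountableTopology N] [T2Space N]
      (M : Type) [TopologicalSpace M] [ChartedSpace (EuclideanSpace ℝ (Fin n)) M]
      [IsManifold (𝓡 n) (⊤ : ℕ∞) M] [SecondCountableTopology M] [T2Space M]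
      (f : N → M) (hf : IsOpenSmoothEmbedding n f) (U : Opens M),
      sect M U → sect N ⟨f ⁻¹' (U : Set M), U.isOpen.preimage hf.continuous⟩
  pull_id : ∀ (M : Type) [TopologicalSpace M] [ChartedSpace (EuclideanSpace ℝ (Fin n)) M]
      [IsManifold (𝓡 n) (⊤ : ℕ∞) M] [SecondCountableTopology M] [T2Space M]
      (hid : IsOpenSmoothEmbedding n (id : M → M)) (U : Opens M) (s : sect M U),
      pull M M id hid U s = s
  pull_comp : ∀ (P : Type) [TopologicalSpace P] [ChartedSpace (EuclideanSpace ℝ (Fin n)) P]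
      [IsManifold (𝓡 n) (⊤ : ℕ∞) P] [SecondCountableTopology P] [T2Space P]
      (N : Type) [TopologicalSpace N] [ChartedSpace (EuclideanSpace ℝ (Fin n)) N]
      [IsManifold (𝓡 n) (⊤ : ℕ∞) N] [SecondCountableTopology N] [T2Space N]
      (M : Type) [TopologicalSpace M] [ChartedSpace (EuclideanSpace ℝ (Fin n)) M]
      [IsManifold (𝓡 n) (⊤ : ℕ∞) M] [SecondCountableTopology M] [T2Space M]
      (g : P → N) (f : N → M) (hg : IsOpenSmoothEmbedding n g)
      (hf : IsOpenSmoothEmbedding n f) (hfg : IsOpenSmoothEmbedding n (f ∘ g))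
      (U : Opens M) (s : sect M U),
      pull P N g hg _ (pull N M f hf U s) = pull P M (f ∘ g) hfg U s
  pull_res : ∀ (N : Type) [TopologicalSpace N] [ChartedSpace (EuclideanSpace ℝ (Fin n)) N]
      [IsManifold (𝓡 n) (⊤ : ℕ∞) N] [SecondCountableTopology N] [T2Space N]
      (M : Type) [TopologicalSpace M] [ChartedSpace (EuclideanSpace ℝ (Fin n)) M]
      [IsManifold (𝓡 n) (⊤ : ℕ∞) M] [SecondCountableTopology M] [T2Space M]
      (f : N → M) (hf : IsOpenSmoothEmbedding n f) {U V : Opens M} (h : V ≤ U)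
      (s : sect M U),
      pull N M f hf V (res M h s)
        = res N (fun _ hx => h hx) (pull N M f hf U s)
  pullD : ∀ (N : Type) [TopologicalSpace N] [ChartedSpace (EuclideanSpace ℝ (Fin n)) N]
      [IsManifold (𝓡 n) (⊤ : ℕ∞) N] [SecondCountableTopology N] [T2Space N]
      (M : Type) [TopologicalSpace M] [ChartedSpace (EuclideanSpace ℝ (Fin n)) M]
      [IsManifold (𝓡 n) (⊤ : ℕ∞) M] [SecondCountableTopology M] [T2Space M]
      (e : OpenPartialHomeomorph N M),
      ContMDiffOn (𝓡 n) (𝓡 n) (⊤ : ℕ∞) e e.source →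
      ContMDiffOn (𝓡 n) (𝓡 n) (⊤ : ℕ∞) e.symm e.target →
      ∀ (V : Opens N) (U : Opens M), (V : Set N) ⊆ e.source → e '' (V : Set N) = (U : Set M) →
      sect M U → sect N V
  pullD_refl : ∀ (M : Type) [TopologicalSpace M] [ChartedSpace (EuclideanSpace ℝ (Fin n)) M]
      [IsManifold (𝓡 n) (⊤ : ℕ∞) M] [SecondCountableTopology M] [T2Space M]
      (h₁ : ContMDiffOn (𝓡 n) (𝓡 n) (⊤ : ℕ∞) (OpenPartialHomeomorph.refl M) (OpenPartialHomeomorph.refl M).source)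
      (h₂ : ContMDiffOn (𝓡 n) (𝓡 n) (⊤ : ℕ∞) (OpenPartialHomeomorph.refl M).symm (OpenPartialHomeomorph.refl M).target)
      (V : Opens M) (s : sect M V),
      pullD M M (OpenPartialHomeomorph.refl M) h₁ h₂ V V (subset_univ _) (image_id _) s = s
  pullD_res : ∀ (N : Type) [TopologicalSpace N] [ChartedSpace (EuclideanSpace ℝ (Fin n)) N]
      [IsManifold (𝓡 n) (⊤ : ℕ∞) N] [SecondCountableTopology N] [T2Space N]
      (M : Type) [TopologicalSpace M] [ChartedSpace (EuclideanSpace ℝ (Fin n)) M]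
      [IsManifold (𝓡 n) (⊤ : ℕ∞) M] [SecondCountableTopology M] [T2Space M]
      (e : OpenPartialHomeomorph N M)
      (h₁ : ContMDiffOn (𝓡 n) (𝓡 n) (⊤ : ℕ∞) e e.source)
      (h₂ : ContMDiffOn (𝓡 n) (𝓡 n) (⊤ : ℕ∞) e.symm e.target)
      {V' V : Opens N} {U' U : Opens M} (hV : (V : Set N) ⊆ e.source)
      (hV' : (V' : Set N) ⊆ e.source)
      (hU : e '' (V : Set N) = (U : Set M)) (hU' : e '' (V' : Set N) = (U' : Set M))
      (hVV' : V' ≤ V) (hUU' : U' ≤ U) (s : sect M U),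
      res N hVV' (pullD N M e h₁ h₂ V U hV hU s)
        = pullD N M e h₁ h₂ V' U' hV' hU' (res M hUU' s)
  pullD_trans : ∀ (P : Type) [TopologicalSpace P] [ChartedSpace (EuclideanSpace ℝ (Fin n)) P]
      [IsManifold (𝓡 n) (⊤ : ℕ∞) P] [SecondCountableTopology P] [T2Space P]
      (N : Type) [TopologicalSpace N] [ChartedSpace (EuclideanSpace ℝ (Fin n)) N]
      [IsManifold (𝓡 n) (⊤ : ℕ∞) N] [SecondCountableTopology N] [T2Space N]
      (M : Type) [TopologicalSpace M] [ChartedSpace (EuclideanSpace ℝ (Fin n)) M]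
      [IsManifold (𝓡 n) (⊤ : ℕ∞) M] [SecondCountableTopology M] [T2Space M]
      (e : OpenPartialHomeomorph P N) (f : OpenPartialHomeomorph N M)
      (he₁ : ContMDiffOn (𝓡 n) (𝓡 n) (⊤ : ℕ∞) e e.source)
      (he₂ : ContMDiffOn (𝓡 n) (𝓡 n) (⊤ : ℕ∞) e.symm e.target)
      (hf₁ : ContMDiffOn (𝓡 n) (𝓡 n) (⊤ : ℕ∞) f f.source)
      (hf₂ : ContMDiffOn (𝓡 n) (𝓡 n) (⊤ : ℕ∞) f.symm f.target)
      (hef₁ : ContMDiffOn (𝓡 n) (𝓡 n) (⊤ : ℕ∞) (e.trans f) (e.trans f).source)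
      (hef₂ : ContMDiffOn (𝓡 n) (𝓡 n) (⊤ : ℕ∞) (e.trans f).symm (e.trans f).target)
      (W : Opens P) (V : Opens N) (U : Opens M)
      (hW : (W : Set P) ⊆ e.source) (hV : e '' (W : Set P) = (V : Set N))
      (hV' : (V : Set N) ⊆ f.source) (hU : f '' (V : Set N) = (U : Set M))
      (hW' : (W : Set P) ⊆ (e.trans f).source)
      (hU' : (e.trans f) '' (W : Set P) = (U : Set M))
      (s : sect M U),
      pullD P N e he₁ he₂ W V hW hV (pullD N M f hf₁ hf₂ V U hV' hU s)
        = pullD P M (e.trans f) hef₁ hef₂ W U hW' hU' s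
  pull_pullD : ∀ (N : Type) [TopologicalSpace N] [ChartedSpace (EuclideanSpace ℝ (Fin n)) N]
      [IsManifold (𝓡 n) (⊤ : ℕ∞) N] [SecondCountableTopology N] [T2Space N]
      (M : Type) [TopologicalSpace M] [ChartedSpace (EuclideanSpace ℝ (Fin n)) M]
      [IsManifold (𝓡 n) (⊤ : ℕ∞) M] [SecondCountableTopology M] [T2Space M]
      (f : N → M) (hf : IsOpenSmoothEmbedding n f) (e : OpenPartialHomeomorph N M)
      (h₁ : ContMDiffOn (𝓡 n) (𝓡 n) (⊤ : ℕ∞) e e.source)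
      (h₂ : ContMDiffOn (𝓡 n) (𝓡 n) (⊤ : ℕ∞) e.symm e.target)
      (hef : EqOn f e e.source)
      (V : Opens N) (U : Opens M) (hV : (V : Set N) ⊆ e.source)
      (hU : e '' (V : Set N) = (U : Set M)) (s : sect M U),
      pullD N M e h₁ h₂ V U hV hU s
        = res N (fun x hx => by
            show f x ∈ (U : Set M)
            rw [← hU]
            exact ⟨x, hx, (hef (hV hx)).symm⟩)
          (pull N M f hf U s)
  locality : ∀ (M : Type) [TopologicalSpace M] [ChartedSpace (EuclideanSpace ℝ (Fin n)) M]
      [IsManifold (𝓡 n) (⊤ : ℕ∞) M] [SecondCountableTopology M] [T2Space M]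
      {ι : Type} (U : ι → Opens M) (s t : sect M (⨆ i, U i)),
      (∀ i, res M (le_iSup U i) s = res M (le_iSup U i) t) → s = t
  gluing : ∀ (M : Type) [TopologicalSpace M] [ChartedSpace (EuclideanSpace ℝ (Fin n)) M]
      [IsManifold (𝓡 n) (⊤ : ℕ∞) M] [SecondCountableTopology M] [T2Space M]
      {ι : Type} (U : ι → Opens M) (s : ∀ i, sect M (U i)),
      (∀ i j, res M (inf_le_left : U i ⊓ U j ≤ U i) (s i)
        = res M (inf_le_right : U i ⊓ U j ≤ U j) (s j)) →
      ∃ σ : sect M (⨆ i, U i), ∀ i, res M (le_iSup U i) σ = s i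

/-- A topological enhancement of a set-valued sheaf on smooth `n`-manifolds over `ℝⁿ`:
a topology on the set of sections over every open subset of `ℝⁿ` such that (a) restriction to a
smaller open subset is continuous, (b) pullback along every diffeomorphism between open subsets
of `ℝⁿ` is a homeomorphism, and (c) for every open cover the canonical injection into the
product of the spaces of local sections is a topological embedding. -/
structure TopEnhancement (n : ℕ) (Ψ : SetSheaf n) : Type 1 where
  τ : ∀ U : Opens (EuclideanSpace ℝ (Fin n)),
      TopologicalSpace (Ψ.sect (EuclideanSpace ℝ (Fin n)) U)
  continuous_res : ∀ {U V : Opens (EuclideanSpace ℝ (Fin n))} (h : V ≤ U),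
      @Continuous _ _ (τ U) (τ V) (Ψ.res _ h)
  isHomeomorph_pullD :
    ∀ (e : OpenPartialHomeomorph (EuclideanSpace ℝ (Fin n)) (EuclideanSpace ℝ (Fin n)))
      (h₁ : ContMDiffOn (𝓡 n) (𝓡 n) (⊤ : ℕ∞) e e.source)
      (h₂ : ContMDiffOn (𝓡 n) (𝓡 n) (⊤ : ℕ∞) e.symm e.target)
      (V U : Opens (EuclideanSpace ℝ (Fin n)))
      (hV : (V : Set (EuclideanSpace ℝ (Fin n))) ⊆ e.source)
      (hU : e '' (V : Set (EuclideanSpace ℝ (Fin n))) = (U : Set (EuclideanSpace ℝ (Fin n)))),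
      @IsHomeomorph _ _ (τ U) (τ V) (Ψ.pullD _ _ e h₁ h₂ V U hV hU)
  isEmbedding_cover : ∀ {ι : Type} (U : ι → Opens (EuclideanSpace ℝ (Fin n))),
      @Topology.IsEmbedding _ _ (τ (⨆ i, U i)) (@Pi.topologicalSpace ι _ (fun i => τ (U i)))
        (fun s i => Ψ.res _ (le_iSup U i) s)
/-- The affine-patch topology on the set of sections of `Ψ` over an open subset `U` of a smooth
`n`-manifold `M`, relative to a family of smooth diffeomorphisms `e i` from open subsets of `M`
contained in `U` onto open subsets of `ℝⁿ` (the affine patches): each set of sections over a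
patch `(e i).source` is topologised by transporting the given topology on the sections over the
open subset `(e i).target ⊆ ℝⁿ` along the bijection given by pullback along `e i`, and the
sections over `U` get the initial (subspace) topology induced by the canonical injection into
the product of the sections over the patches. -/
def patchTop (n : ℕ) (Ψ : SetSheaf n) (T : TopEnhancement n Ψ)
    (M : Type) [TopologicalSpace M] [ChartedSpace (EuclideanSpace ℝ (Fin n)) M]
    [IsManifold (𝓡 n) (⊤ : ℕ∞) M] [SecondCountableTopology M] [T2Space M]
    (U : Opens M) {ι : Type} (e : ι → OpenPartialHomeomorph M (EuclideanSpace ℝ (Fin n)))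
    (hsm : ∀ i, ContMDiffOn (𝓡 n) (𝓡 n) (⊤ : ℕ∞) (e i) (e i).source)
    (hsm' : ∀ i, ContMDiffOn (𝓡 n) (𝓡 n) (⊤ : ℕ∞) (e i).symm (e i).target)
    (hsub : ∀ i, (e i).source ⊆ (U : Set M)) :
    TopologicalSpace (Ψ.sect M U) :=
  TopologicalSpace.induced
    (fun s i => Ψ.res M
      (show (⟨(e i).source, (e i).open_source⟩ : Opens M) ≤ U from hsub i) s)
    (@Pi.topologicalSpace ι _ (fun i =>
      TopologicalSpace.coinduced
        (Ψ.pullD M (EuclideanSpace ℝ (Fin n)) (e i) (hsm i) (hsm' i)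
          ⟨(e i).source, (e i).open_source⟩ ⟨(e i).target, (e i).open_target⟩
          subset_rfl (e i).image_source_eq_target)
        (T.τ ⟨(e i).target, (e i).open_target⟩)))
section helpers

variable {n : ℕ}
variable {A : Type} [TopologicalSpace A] [ChartedSpace (EuclideanSpace ℝ (Fin n)) A]
  [IsManifold (𝓡 n) (⊤ : ℕ∞) A] [SecondCountableTopology A] [T2Space A]
variable {B : Type} [TopologicalSpace B] [ChartedSpace (EuclideanSpace ℝ (Fin n)) B]
  [IsManifold (𝓡 n) (⊤ : ℕ∞) B] [SecondCountableTopology B] [T2Space B]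
variable {C : Type} [TopologicalSpace C] [ChartedSpace (EuclideanSpace ℝ (Fin n)) C]
  [IsManifold (𝓡 n) (⊤ : ℕ∞) C] [SecondCountableTopology C] [T2Space C]

lemma isOpenSmoothEmbedding_id : IsOpenSmoothEmbedding n (id : A → A) := by
  refine ⟨fun a b h => h, ?_⟩
  have := (Diffeomorph.refl (𝓡 n) A (⊤ : ℕ∞)).isLocalDiffeomorph
  rwa [Diffeomorph.coe_refl] at this

lemma contMDiffOn_trans_ph (e : OpenPartialHomeomorph A B) (g : OpenPartialHomeomorph B C)
    (he : ContMDiffOn (𝓡 n) (𝓡 n) (⊤ : ℕ∞) e e.source)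
    (hg : ContMDiffOn (𝓡 n) (𝓡 n) (⊤ : ℕ∞) g g.source) :
    ContMDiffOn (𝓡 n) (𝓡 n) (⊤ : ℕ∞) (e.trans g) (e.trans g).source := by
  rw [OpenPartialHomeomorph.coe_trans, OpenPartialHomeomorph.trans_source]
  exact hg.comp (he.mono inter_subset_left) inter_subset_right

lemma contMDiffOn_trans_symm_ph (e : OpenPartialHomeomorph A B) (g : OpenPartialHomeomorph B C)
    (he : ContMDiffOn (𝓡 n) (𝓡 n) (⊤ : ℕ∞) e.symm e.target)
    (hg : ContMDiffOn (𝓡 n) (𝓡 n) (⊤ : ℕ∞) g.symm g.target) :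
    ContMDiffOn (𝓡 n) (𝓡 n) (⊤ : ℕ∞) (e.trans g).symm (e.trans g).target :=
  contMDiffOn_trans_ph g.symm e.symm hg he

lemma contMDiffOn_symm_toOpenPartialHomeomorph [Nonempty A] {f : A → B}
    (hf : IsOpenSmoothEmbedding n f) (hemb : IsOpenEmbedding f) :
    ContMDiffOn (𝓡 n) (𝓡 n) (⊤ : ℕ∞) (hemb.toOpenPartialHomeomorph f).symm
      (hemb.toOpenPartialHomeomorph f).target := by
  intro y hy
  rw [Topology.IsOpenEmbedding.toOpenPartialHomeomorph_target] at hy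
  obtain ⟨x, rfl⟩ := hy
  obtain ⟨Φ, hxΦ, hfΦ⟩ := hf.2 x
  have aux : EqOn (hemb.toOpenPartialHomeomorph f).symm Φ.symm Φ.target := by
    intro z hz
    have h1 : f (Φ.symm z) = z :=
      (hfΦ (Φ.toPartialEquiv.map_target hz)).trans (Φ.toPartialEquiv.right_inv hz)
    calc (hemb.toOpenPartialHomeomorph f).symm z
        = (hemb.toOpenPartialHomeomorph f).symm (f (Φ.symm z)) := by rw [h1]
      _ = Φ.symm z := Topology.IsOpenEmbedding.toOpenPartialHomeomorph_left_inv f hemb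
  have hyΦ : f x ∈ Φ.target := by
    have := Φ.toPartialEquiv.map_source hxΦ
    rwa [← hfΦ hxΦ] at this
  exact ((Φ.symm.contMDiffOn.congr aux).contMDiffAt
    (Φ.open_target.mem_nhds hyΦ)).contMDiffWithinAt

lemma continuous_of_subsingleton' {X Y : Type} (tX : TopologicalSpace X)
    (tY : TopologicalSpace Y) [Subsingleton Y] (g : X → Y) :
    @Continuous _ _ tX tY g := by
  rw [continuous_def]
  intro s _
  rcases s.eq_empty_or_nonempty with rfl | ⟨y0, hy0⟩
  · simpa using isOpen_empty
  · have : s = univ := eq_univ_iff_forall.mpr fun y => (Subsingleton.elim y0 y) ▸ hy0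
    rw [this]
    simpa using isOpen_univ

end helpers

section sheafhelpers

variable {n : ℕ} (Ψ : SetSheaf n)
variable {A : Type} [TopologicalSpace A] [ChartedSpace (EuclideanSpace ℝ (Fin n)) A]
  [IsManifold (𝓡 n) (⊤ : ℕ∞) A] [SecondCountableTopology A] [T2Space A]
variable {B : Type} [TopologicalSpace B] [ChartedSpace (EuclideanSpace ℝ (Fin n)) B]
  [IsManifold (𝓡 n) (⊤ : ℕ∞) B] [SecondCountableTopology B] [T2Space B]

/-- Pulling back along `e.symm` and then along `e` is the identity. -/
lemma pullD_cancel (e : OpenPartialHomeomorph A B)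
    (h₁ : ContMDiffOn (𝓡 n) (𝓡 n) (⊤ : ℕ∞) e e.source)
    (h₂ : ContMDiffOn (𝓡 n) (𝓡 n) (⊤ : ℕ∞) e.symm e.target)
    (V : Opens A) (U : Opens B) (hV : (V : Set A) ⊆ e.source) (hU : e '' (V : Set A) = U)
    (hU' : (U : Set B) ⊆ e.symm.source) (hV' : e.symm '' (U : Set B) = V)
    (s : Ψ.sect A V) :
    Ψ.pullD A B e h₁ h₂ V U hV hU (Ψ.pullD B A e.symm h₂ h₁ U V hU' hV' s) = s := by
  have hEq : EqOn (id : A → A) (e.trans e.symm) (e.trans e.symm).source := by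
    intro x hx
    rw [OpenPartialHomeomorph.trans_source] at hx
    exact (e.left_inv hx.1).symm
  have hVt : (V : Set A) ⊆ (e.trans e.symm).source := by
    rw [OpenPartialHomeomorph.trans_source]
    exact fun x hx => ⟨hV hx, e.map_source (hV hx)⟩
  have hUt : (e.trans e.symm) '' (V : Set A) = (V : Set A) := by
    rw [OpenPartialHomeomorph.coe_trans, image_comp, hU, hV']
  have hc₁ : ContMDiffOn (𝓡 n) (𝓡 n) (⊤ : ℕ∞) (e.trans e.symm) (e.trans e.symm).source :=
    contMDiffOn_id.congr fun x hx => (hEq hx).symm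
  have hc₂ : ContMDiffOn (𝓡 n) (𝓡 n) (⊤ : ℕ∞) (e.trans e.symm).symm (e.trans e.symm).target :=
    contMDiffOn_id.congr fun y hy =>
      (hEq ((e.trans e.symm).map_target hy)).trans ((e.trans e.symm).right_inv hy)
  calc
    Ψ.pullD A B e h₁ h₂ V U hV hU (Ψ.pullD B A e.symm h₂ h₁ U V hU' hV' s)
        = Ψ.pullD A A (e.trans e.symm) hc₁ hc₂ V V hVt hUt s :=
      Ψ.pullD_trans A B A e e.symm h₁ h₂ h₂ h₁ hc₁ hc₂ V U V hV hU hU' hV' hVt hUt s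
    _ = Ψ.res A (fun x hx => by
          show (id : A → A) x ∈ ((V : Opens A) : Set A)
          rw [← hUt]
          exact ⟨x, hx, (hEq (hVt hx)).symm⟩)
        (Ψ.pull A A id isOpenSmoothEmbedding_id V s) :=
      Ψ.pull_pullD A A id isOpenSmoothEmbedding_id (e.trans e.symm) hc₁ hc₂ hEq V V hVt hUt s
    _ = s := by
      rw [Ψ.pull_id A isOpenSmoothEmbedding_id V s]
      exact Ψ.res_id A V s

/-- Sections over the empty manifold form a subsingleton. -/
lemma sect_subsingleton [IsEmpty A] (U : Opens A) : Subsingleton (Ψ.sect A U) := by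
  constructor
  intro a b
  have hU : U = ⨆ (i : Empty), (Empty.elim i : Opens A) := by
    apply le_antisymm
    · exact fun x _ => (IsEmpty.false x).elim
    · exact fun x _ => (IsEmpty.false x).elim
  subst hU
  exact Ψ.locality A (fun i : Empty => Empty.elim i) a b fun i => i.elim

/-- Pulling back along a map equal to the identity is the identity. -/
lemma res_pull_eq_id (k : A → A) (hkid : k = id) (hk : IsOpenSmoothEmbedding n k)
    (h : (⊤ : Opens A) ≤ ⟨k ⁻¹' (((⊤ : Opens A) : Set A)),
      (⊤ : Opens A).isOpen.preimage hk.continuous⟩)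
    (s : Ψ.sect A ⊤) : Ψ.res A h (Ψ.pull A A k hk ⊤ s) = s := by
  subst hkid
  rw [Ψ.pull_id A hk ⊤ s]
  exact Ψ.res_id A ⊤ s

end sheafhelpers


section mainaux

variable {n : ℕ}

lemma continuous_into_cover (Ψ : SetSheaf n) (T : TopEnhancement n Ψ) {X : Type}
    (tX : TopologicalSpace X) {ι : Type} (U : ι → Opens (EuclideanSpace ℝ (Fin n)))
    (V : Opens (EuclideanSpace ℝ (Fin n))) (h : (⨆ i, U i) = V)
    (g : X → Ψ.sect (EuclideanSpace ℝ (Fin n)) V)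
    (hg : ∀ i, @Continuous _ _ tX (T.τ (U i))
      fun x => Ψ.res _ (h ▸ le_iSup U i) (g x)) :
    @Continuous _ _ tX (T.τ V) g := by
  subst h
  letI : ∀ Uo : Opens (EuclideanSpace ℝ (Fin n)),
      TopologicalSpace (Ψ.sect (EuclideanSpace ℝ (Fin n)) Uo) := T.τ
  have hemb := T.isEmbedding_cover U
  rw [hemb.eq_induced]
  exact continuous_induced_rng.mpr (continuous_pi hg)

end mainaux


theorem restriction_continuous_aux (n : ℕ) (Ψ : SetSheaf n) (T : TopEnhancement n Ψ)
    (M : Type) [TopologicalSpace M] [ChartedSpace (EuclideanSpace ℝ (Fin n)) M]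
    [IsManifold (𝓡 n) (⊤ : ℕ∞) M] [SecondCountableTopology M] [T2Space M]
    (N : Type) [TopologicalSpace N] [ChartedSpace (EuclideanSpace ℝ (Fin n)) N]
    [IsManifold (𝓡 n) (⊤ : ℕ∞) N] [SecondCountableTopology N] [T2Space N]
    {ι κ : Type}
    (e : ι → OpenPartialHomeomorph M (EuclideanSpace ℝ (Fin n)))
    (hsmₑ : ∀ i, ContMDiffOn (𝓡 n) (𝓡 n) (⊤ : ℕ∞) (e i) (e i).source)
    (hsmₑ' : ∀ i, ContMDiffOn (𝓡 n) (𝓡 n) (⊤ : ℕ∞) (e i).symm (e i).target)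
    (hcovₑ : (⋃ i, (e i).source) = univ)
    (d : κ → OpenPartialHomeomorph N (EuclideanSpace ℝ (Fin n)))
    (hsm_d : ∀ j, ContMDiffOn (𝓡 n) (𝓡 n) (⊤ : ℕ∞) (d j) (d j).source)
    (hsm_d' : ∀ j, ContMDiffOn (𝓡 n) (𝓡 n) (⊤ : ℕ∞) (d j).symm (d j).target)
    (f : N → M) (hf : IsOpenSmoothEmbedding n f) :
    @Continuous _ _
        (patchTop n Ψ T M ⊤ e hsmₑ hsmₑ' (fun _ => subset_univ _))
        (patchTop n Ψ T N ⊤ d hsm_d hsm_d' (fun _ => subset_univ _))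
        (fun s => Ψ.res N (fun x _ => Set.mem_univ (f x))
          (Ψ.pull N M f hf ⊤ s)) := by
  rcases isEmpty_or_nonempty N with hN | hN
  · haveI := sect_subsingleton Ψ (A := N) (⊤ : Opens N)
    exact continuous_of_subsingleton' _ _ _
  letI : ∀ Uo : Opens (EuclideanSpace ℝ (Fin n)),
      TopologicalSpace (Ψ.sect (EuclideanSpace ℝ (Fin n)) Uo) := T.τ
  letI tpM : ∀ i' : ι, TopologicalSpace (Ψ.sect M ⟨(e i').source, (e i').open_source⟩) :=
    fun i' => TopologicalSpace.coinduced
      (Ψ.pullD M (EuclideanSpace ℝ (Fin n)) (e i') (hsmₑ i') (hsmₑ' i')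
        ⟨(e i').source, (e i').open_source⟩ ⟨(e i').target, (e i').open_target⟩
        subset_rfl (e i').image_source_eq_target)
      (T.τ ⟨(e i').target, (e i').open_target⟩)
  letI tpN : ∀ j' : κ, TopologicalSpace (Ψ.sect N ⟨(d j').source, (d j').open_source⟩) :=
    fun j' => TopologicalSpace.coinduced
      (Ψ.pullD N (EuclideanSpace ℝ (Fin n)) (d j') (hsm_d j') (hsm_d' j')
        ⟨(d j').source, (d j').open_source⟩ ⟨(d j').target, (d j').open_target⟩
        subset_rfl (d j').image_source_eq_target)
      (T.τ ⟨(d j').target, (d j').open_target⟩)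
  letI tM : TopologicalSpace (Ψ.sect M ⊤) :=
    patchTop n Ψ T M ⊤ e hsmₑ hsmₑ' (fun _ => subset_univ _)
  letI tN : TopologicalSpace (Ψ.sect N ⊤) :=
    patchTop n Ψ T N ⊤ d hsm_d hsm_d' (fun _ => subset_univ _)
  -- global data about `f`
  have hemb : IsOpenEmbedding f := hf.2.isLocalHomeomorph.isOpenEmbedding_of_injective hf.1
  have hFc : ⇑(hemb.toOpenPartialHomeomorph f) = f := hemb.toOpenPartialHomeomorph_apply f
  have hFs : (hemb.toOpenPartialHomeomorph f).source = univ := hemb.toOpenPartialHomeomorph_source f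
  have hF₁ : ContMDiffOn (𝓡 n) (𝓡 n) (⊤ : ℕ∞) (hemb.toOpenPartialHomeomorph f)
      (hemb.toOpenPartialHomeomorph f).source := by
    rw [hFc]
    exact hf.2.contMDiff.contMDiffOn
  have hF₂ : ContMDiffOn (𝓡 n) (𝓡 n) (⊤ : ℕ∞) (hemb.toOpenPartialHomeomorph f).symm
      (hemb.toOpenPartialHomeomorph f).target :=
    contMDiffOn_symm_toOpenPartialHomeomorph hf hemb
  have hefF : EqOn f (hemb.toOpenPartialHomeomorph f) (hemb.toOpenPartialHomeomorph f).source :=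
    fun x _ => (congrFun hFc x).symm
  -- continuity of the canonical maps out of `patchTop M`
  have hdom : @Continuous _ _ tM (Pi.topologicalSpace (t₂ := tpM))
      (fun s i' => Ψ.res M
        (show (⟨(e i').source, (e i').open_source⟩ : Opens M) ≤ ⊤ from subset_univ _) s) :=
    continuous_induced_dom
  have hCi : ∀ i : ι, @Continuous _ _ tM (T.τ ⟨(e i).target, (e i).open_target⟩)
      (fun s => Ψ.pullD (EuclideanSpace ℝ (Fin n)) M (e i).symm (hsmₑ' i) (hsmₑ i)
        ⟨(e i).target, (e i).open_target⟩ ⟨(e i).source, (e i).open_source⟩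
        subset_rfl (e i).symm_image_target_eq_source
        (Ψ.res M le_top s)) := by
    intro i
    have h1 : @Continuous _ _ tM (tpM i)
        (fun s => Ψ.res M (show (⟨(e i).source, (e i).open_source⟩ : Opens M) ≤ ⊤ from
          subset_univ _) s) :=
      (continuous_apply i).comp hdom
    have h2 : @Continuous _ _ (tpM i) (T.τ ⟨(e i).target, (e i).open_target⟩)
        (fun s => Ψ.pullD (EuclideanSpace ℝ (Fin n)) M (e i).symm (hsmₑ' i) (hsmₑ i)
          ⟨(e i).target, (e i).open_target⟩ ⟨(e i).source, (e i).open_source⟩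
          subset_rfl (e i).symm_image_target_eq_source s) := by
      refine continuous_coinduced_dom.mpr ?_
      refine continuous_id.congr fun t => ?_
      exact (pullD_cancel Ψ (e i).symm (hsmₑ' i) (hsmₑ i)
        ⟨(e i).target, (e i).open_target⟩ ⟨(e i).source, (e i).open_source⟩
        subset_rfl (e i).symm_image_target_eq_source
        subset_rfl (e i).image_source_eq_target t).symm
    exact h2.comp h1
  -- it suffices to prove continuity of each component into the coinduced topologies
  refine continuous_induced_rng.mpr (continuous_pi ?_)
  intro j
  -- the key continuity statement into `τ ((d j).target)`
  have key : @Continuous _ _ tM (T.τ ⟨(d j).target, (d j).open_target⟩)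
      (fun s => Ψ.pullD (EuclideanSpace ℝ (Fin n)) N (d j).symm (hsm_d' j) (hsm_d j)
        ⟨(d j).target, (d j).open_target⟩ ⟨(d j).source, (d j).open_source⟩
        subset_rfl (d j).symm_image_target_eq_source
        (Ψ.res N le_top
          (Ψ.res N (fun x _ => Set.mem_univ (f x)) (Ψ.pull N M f hf ⊤ s)))) := by
    have hWopen : ∀ i : ι, IsOpen ((d j) '' ((d j).source ∩ f ⁻¹' (e i).source)) := fun i =>
      (d j).isOpen_image_of_subset_source
        ((d j).open_source.inter ((e i).open_source.preimage hf.continuous)) inter_subset_left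
    set W : ι → Opens (EuclideanSpace ℝ (Fin n)) := fun i =>
      ⟨(d j) '' ((d j).source ∩ f ⁻¹' (e i).source), hWopen i⟩ with hWdef
    have hsup : (⨆ i, W i) = ⟨(d j).target, (d j).open_target⟩ := by
      apply SetLike.ext'
      rw [Opens.coe_iSup]
      have : ∀ i, ((W i : Opens (EuclideanSpace ℝ (Fin n))) : Set (EuclideanSpace ℝ (Fin n)))
          = (d j) '' ((d j).source ∩ f ⁻¹' (e i).source) := fun i => rfl
      simp only [this]
      rw [← image_iUnion, ← inter_iUnion, ← preimage_iUnion, hcovₑ, preimage_univ, inter_univ,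
        (d j).image_source_eq_target]
      rfl
    refine continuous_into_cover Ψ T tM W ⟨(d j).target, (d j).open_target⟩ hsup _ (fun i => ?_)
    -- set up the local data for the pair of charts `(d j, e i)`
    have hSopen : IsOpen ((d j).source ∩ f ⁻¹' (e i).source) :=
      (d j).open_source.inter ((e i).open_source.preimage hf.continuous)
    have hSsub : ((d j).source ∩ f ⁻¹' (e i).source) ⊆ (d j).source := inter_subset_left
    have hfSopen : IsOpen (f '' ((d j).source ∩ f ⁻¹' (e i).source)) :=
      hf.2.isOpenMap _ hSopen
    have hfSsub : (f '' ((d j).source ∩ f ⁻¹' (e i).source)) ⊆ (e i).source := by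
      rintro _ ⟨x, hx, rfl⟩; exact hx.2
    have hU'open : IsOpen ((e i) '' (f '' ((d j).source ∩ f ⁻¹' (e i).source))) :=
      (e i).isOpen_image_of_subset_source hfSopen hfSsub
    -- the opens involved
    set S : Opens N := ⟨(d j).source ∩ f ⁻¹' (e i).source, hSopen⟩ with hSdef
    set fS : Opens M := ⟨f '' ((d j).source ∩ f ⁻¹' (e i).source), hfSopen⟩ with hfSdef
    set U'o : Opens (EuclideanSpace ℝ (Fin n)) :=
      ⟨(e i) '' (f '' ((d j).source ∩ f ⁻¹' (e i).source)), hU'open⟩ with hU'def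
    -- set inclusions and images
    have hWsub : ((W i : Opens (EuclideanSpace ℝ (Fin n))) : Set (EuclideanSpace ℝ (Fin n)))
        ⊆ (d j).symm.source := by
      rintro _ ⟨x, hx, rfl⟩; exact (d j).map_source (hSsub hx)
    have hsymmW : (d j).symm '' ((W i : Opens (EuclideanSpace ℝ (Fin n))) :
        Set (EuclideanSpace ℝ (Fin n))) = (S : Set N) :=
      (d j).symm_image_image_of_subset_source hSsub
    have hU'sub : (U'o : Set (EuclideanSpace ℝ (Fin n))) ⊆ (e i).symm.source := by
      rintro _ ⟨y, hy, rfl⟩; exact (e i).map_source (hfSsub hy)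
    have hsymmU' : (e i).symm '' (U'o : Set (EuclideanSpace ℝ (Fin n))) = (fS : Set M) :=
      (e i).symm_image_image_of_subset_source hfSsub
    have hSF : (S : Set N) ⊆ (hemb.toOpenPartialHomeomorph f).source := by
      rw [hFs]; exact subset_univ _
    have hFimg : (hemb.toOpenPartialHomeomorph f) '' (S : Set N) = (fS : Set M) := by
      rw [hFc]; rfl
    -- the partial homeomorphism `G = (d j).symm.trans F` and `ψ = G.trans (e i)`
    have hGsrc : ((W i : Opens (EuclideanSpace ℝ (Fin n))) : Set (EuclideanSpace ℝ (Fin n)))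
        ⊆ ((d j).symm.trans (hemb.toOpenPartialHomeomorph f)).source := by
      rw [OpenPartialHomeomorph.trans_source, hFs, preimage_univ, inter_univ]
      exact hWsub
    have hGimg : ((d j).symm.trans (hemb.toOpenPartialHomeomorph f)) ''
        ((W i : Opens (EuclideanSpace ℝ (Fin n))) : Set (EuclideanSpace ℝ (Fin n)))
        = (fS : Set M) := by
      rw [OpenPartialHomeomorph.coe_trans, image_comp, hsymmW, hFc]; rfl
    have hψsrc : ((W i : Opens (EuclideanSpace ℝ (Fin n))) : Set (EuclideanSpace ℝ (Fin n)))
        ⊆ (((d j).symm.trans (hemb.toOpenPartialHomeomorph f)).trans (e i)).source := by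
      rw [OpenPartialHomeomorph.trans_source]
      refine fun x hx => ⟨hGsrc hx, ?_⟩
      have hmem : ((d j).symm.trans (hemb.toOpenPartialHomeomorph f)) x ∈
          ((d j).symm.trans (hemb.toOpenPartialHomeomorph f)) ''
            ((W i : Opens (EuclideanSpace ℝ (Fin n))) : Set (EuclideanSpace ℝ (Fin n))) :=
        mem_image_of_mem _ hx
      rw [hGimg] at hmem
      exact hfSsub hmem
    have hψimg : (((d j).symm.trans (hemb.toOpenPartialHomeomorph f)).trans (e i)) ''
        ((W i : Opens (EuclideanSpace ℝ (Fin n))) : Set (EuclideanSpace ℝ (Fin n)))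
        = (U'o : Set (EuclideanSpace ℝ (Fin n))) := by
      rw [OpenPartialHomeomorph.coe_trans, image_comp, hGimg]; rfl
    -- smoothness of the transition functions
    have hG₁ := contMDiffOn_trans_ph (d j).symm (hemb.toOpenPartialHomeomorph f) (hsm_d' j) hF₁
    have hG₂ := contMDiffOn_trans_symm_ph (d j).symm (hemb.toOpenPartialHomeomorph f)
      (hsm_d j) hF₂
    have hψ₁ := contMDiffOn_trans_ph ((d j).symm.trans (hemb.toOpenPartialHomeomorph f)) (e i)
      hG₁ (hsmₑ i)
    have hψ₂ := contMDiffOn_trans_symm_ph ((d j).symm.trans (hemb.toOpenPartialHomeomorph f)) (e i)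
      hG₂ (hsmₑ' i)
    -- continuity of the comparison map
    refine Continuous.congr (f := fun s =>
      Ψ.pullD (EuclideanSpace ℝ (Fin n)) (EuclideanSpace ℝ (Fin n))
        (((d j).symm.trans (hemb.toOpenPartialHomeomorph f)).trans (e i)) hψ₁ hψ₂
        (W i) U'o hψsrc hψimg
        (Ψ.res (EuclideanSpace ℝ (Fin n)) (show U'o ≤ ⟨(e i).target, (e i).open_target⟩ from by
            rintro y ⟨z, hz, rfl⟩
            exact (e i).map_source (hfSsub hz))
          (Ψ.pullD (EuclideanSpace ℝ (Fin n)) M (e i).symm (hsmₑ' i) (hsmₑ i)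
            ⟨(e i).target, (e i).open_target⟩ ⟨(e i).source, (e i).open_source⟩
            subset_rfl (e i).symm_image_target_eq_source
            (Ψ.res M le_top s)))) ?_ ?_
    · exact ((T.isHomeomorph_pullD _ hψ₁ hψ₂ (W i) U'o hψsrc hψimg).continuous).comp
        ((T.continuous_res _).comp (hCi i))
    · intro s
      have hle1 : U'o ≤ (⟨(e i).target, (e i).open_target⟩ :
          Opens (EuclideanSpace ℝ (Fin n))) := by
        rintro y ⟨z, hz, rfl⟩
        exact (e i).map_source (hfSsub hz)
      have hfS_src : fS ≤ (⟨(e i).source, (e i).open_source⟩ : Opens M) :=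
        fun x hx => hfSsub hx
      have hfSle : fS ≤ (⊤ : Opens M) := le_top
      have hS_src : S ≤ (⟨(d j).source, (d j).open_source⟩ : Opens N) :=
        fun x hx => hx.1
      have hWle : W i ≤ (⟨(d j).target, (d j).open_target⟩ :
          Opens (EuclideanSpace ℝ (Fin n))) := fun y hy => hWsub hy
      have hSpre : S ≤ (⟨f ⁻¹' (fS : Set M), fS.isOpen.preimage hf.continuous⟩ : Opens N) :=
        fun x hx => mem_image_of_mem f hx
      calc
        Ψ.pullD (EuclideanSpace ℝ (Fin n)) (EuclideanSpace ℝ (Fin n))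
            (((d j).symm.trans (hemb.toOpenPartialHomeomorph f)).trans (e i)) hψ₁ hψ₂
            (W i) U'o hψsrc hψimg
            (Ψ.res (EuclideanSpace ℝ (Fin n)) hle1
              (Ψ.pullD (EuclideanSpace ℝ (Fin n)) M (e i).symm (hsmₑ' i) (hsmₑ i)
                ⟨(e i).target, (e i).open_target⟩ ⟨(e i).source, (e i).open_source⟩
                subset_rfl (e i).symm_image_target_eq_source
                (Ψ.res M le_top s)))
            = Ψ.pullD (EuclideanSpace ℝ (Fin n)) (EuclideanSpace ℝ (Fin n))
                (((d j).symm.trans (hemb.toOpenPartialHomeomorph f)).trans (e i)) hψ₁ hψ₂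
                (W i) U'o hψsrc hψimg
                (Ψ.pullD (EuclideanSpace ℝ (Fin n)) M (e i).symm (hsmₑ' i) (hsmₑ i)
                  U'o fS hU'sub hsymmU' (Ψ.res M hfSle s)) := by
              refine congrArg _ ?_
              rw [Ψ.pullD_res (EuclideanSpace ℝ (Fin n)) M (e i).symm (hsmₑ' i) (hsmₑ i)
                subset_rfl hU'sub (e i).symm_image_target_eq_source hsymmU' hle1 hfS_src]
              simp only [Ψ.res_comp]
        _ = Ψ.pullD (EuclideanSpace ℝ (Fin n)) M
              ((d j).symm.trans (hemb.toOpenPartialHomeomorph f)) hG₁ hG₂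
              (W i) fS hGsrc hGimg
              (Ψ.pullD M (EuclideanSpace ℝ (Fin n)) (e i) (hsmₑ i) (hsmₑ' i)
                fS U'o hfSsub rfl
                (Ψ.pullD (EuclideanSpace ℝ (Fin n)) M (e i).symm (hsmₑ' i) (hsmₑ i)
                  U'o fS hU'sub hsymmU' (Ψ.res M hfSle s))) :=
            (Ψ.pullD_trans (EuclideanSpace ℝ (Fin n)) M (EuclideanSpace ℝ (Fin n))
              ((d j).symm.trans (hemb.toOpenPartialHomeomorph f)) (e i) hG₁ hG₂
              (hsmₑ i) (hsmₑ' i) hψ₁ hψ₂ (W i) fS U'o hGsrc hGimg hfSsub rfl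
              hψsrc hψimg _).symm
        _ = Ψ.pullD (EuclideanSpace ℝ (Fin n)) M
              ((d j).symm.trans (hemb.toOpenPartialHomeomorph f)) hG₁ hG₂
              (W i) fS hGsrc hGimg (Ψ.res M hfSle s) :=
            congrArg _ (pullD_cancel Ψ (e i) (hsmₑ i) (hsmₑ' i) fS U'o hfSsub rfl
              hU'sub hsymmU' _)
        _ = Ψ.pullD (EuclideanSpace ℝ (Fin n)) N (d j).symm (hsm_d' j) (hsm_d j)
              (W i) S hWsub hsymmW
              (Ψ.pullD N M (hemb.toOpenPartialHomeomorph f) hF₁ hF₂ S fS hSF hFimg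
                (Ψ.res M hfSle s)) :=
            (Ψ.pullD_trans (EuclideanSpace ℝ (Fin n)) N M (d j).symm
              (hemb.toOpenPartialHomeomorph f) (hsm_d' j) (hsm_d j) hF₁ hF₂ hG₁ hG₂
              (W i) S fS hWsub hsymmW hSF hFimg hGsrc hGimg _).symm
        _ = Ψ.pullD (EuclideanSpace ℝ (Fin n)) N (d j).symm (hsm_d' j) (hsm_d j)
              (W i) S hWsub hsymmW
              (Ψ.res N hSpre (Ψ.pull N M f hf fS (Ψ.res M hfSle s))) :=
            congrArg _ (Ψ.pull_pullD N M f hf (hemb.toOpenPartialHomeomorph f) hF₁ hF₂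
              hefF S fS hSF hFimg _)
        _ = Ψ.pullD (EuclideanSpace ℝ (Fin n)) N (d j).symm (hsm_d' j) (hsm_d j)
              (W i) S hWsub hsymmW
              (Ψ.res N hSpre (Ψ.res N (fun _ hx => hfSle hx)
                (Ψ.pull N M f hf ⊤ s))) := by
            refine congrArg _ (congrArg _ ?_)
            exact Ψ.pull_res N M f hf hfSle s
        _ = Ψ.pullD (EuclideanSpace ℝ (Fin n)) N (d j).symm (hsm_d' j) (hsm_d j)
              (W i) S hWsub hsymmW
              (Ψ.res N hS_src (Ψ.res N le_top
                (Ψ.res N (fun x _ => Set.mem_univ (f x)) (Ψ.pull N M f hf ⊤ s)))) := by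
            refine congrArg _ ?_
            simp only [Ψ.res_comp]
        _ = Ψ.res (EuclideanSpace ℝ (Fin n)) hWle
              (Ψ.pullD (EuclideanSpace ℝ (Fin n)) N (d j).symm (hsm_d' j) (hsm_d j)
                ⟨(d j).target, (d j).open_target⟩ ⟨(d j).source, (d j).open_source⟩
                subset_rfl (d j).symm_image_target_eq_source
                (Ψ.res N le_top
                  (Ψ.res N (fun x _ => Set.mem_univ (f x)) (Ψ.pull N M f hf ⊤ s)))) :=
            (Ψ.pullD_res (EuclideanSpace ℝ (Fin n)) N (d j).symm (hsm_d' j) (hsm_d j)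
              subset_rfl hWsub (d j).symm_image_target_eq_source hsymmW hWle hS_src _).symm

  -- conclude using the section of the coinduced topology
  have hconcl : @Continuous _ _ tM (tpN j)
      (fun s => Ψ.res N
        (show (⟨(d j).source, (d j).open_source⟩ : Opens N) ≤ ⊤ from subset_univ _)
        (Ψ.res N (fun x _ => Set.mem_univ (f x)) (Ψ.pull N M f hf ⊤ s))) := by
    have hB : @Continuous _ _ (T.τ ⟨(d j).target, (d j).open_target⟩) (tpN j)
        (Ψ.pullD N (EuclideanSpace ℝ (Fin n)) (d j) (hsm_d j) (hsm_d' j)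
          ⟨(d j).source, (d j).open_source⟩ ⟨(d j).target, (d j).open_target⟩
          subset_rfl (d j).image_source_eq_target) :=
      continuous_coinduced_rng
    refine (hB.comp key).congr fun s => ?_
    exact pullD_cancel Ψ (d j) (hsm_d j) (hsm_d' j)
      ⟨(d j).source, (d j).open_source⟩ ⟨(d j).target, (d j).open_target⟩
      subset_rfl (d j).image_source_eq_target
      subset_rfl (d j).symm_image_target_eq_source _
  exact hconcl


/-- **Lemma 3.5** (`Ψ` becomes a presheaf of topological spaces on smooth `n`-manifolds).
Topologise the set `Ψ(M)` of sections over each smooth `n`-manifold `M` by the affine-patch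
construction (for arbitrary choices of covers by affine patches and of diffeomorphisms to open
subsets of `ℝⁿ`; by Lemma 3.4 the topology does not depend on these choices).  Then for every
open smooth embedding `f : N → M` of smooth `n`-manifolds, the restriction map
`f* : Ψ(M) → Ψ(N)` is continuous; in particular, if `f` is a diffeomorphism (i.e. moreover
surjective) then `f*` is a homeomorphism. -/
theorem restriction_continuous_patchTop (n : ℕ) (Ψ : SetSheaf n) (T : TopEnhancement n Ψ)
    (M : Type) [TopologicalSpace M] [ChartedSpace (EuclideanSpace ℝ (Fin n)) M]
    [IsManifold (𝓡 n) (⊤ : ℕ∞) M] [SecondCountableTopology M] [T2Space M]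
    (N : Type) [TopologicalSpace N] [ChartedSpace (EuclideanSpace ℝ (Fin n)) N]
    [IsManifold (𝓡 n) (⊤ : ℕ∞) N] [SecondCountableTopology N] [T2Space N]
    {ι κ : Type}
    (e : ι → OpenPartialHomeomorph M (EuclideanSpace ℝ (Fin n)))
    (hsmₑ : ∀ i, ContMDiffOn (𝓡 n) (𝓡 n) (⊤ : ℕ∞) (e i) (e i).source)
    (hsmₑ' : ∀ i, ContMDiffOn (𝓡 n) (𝓡 n) (⊤ : ℕ∞) (e i).symm (e i).target)
    (hcovₑ : (⋃ i, (e i).source) = univ)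
    (d : κ → OpenPartialHomeomorph N (EuclideanSpace ℝ (Fin n)))
    (hsm_d : ∀ j, ContMDiffOn (𝓡 n) (𝓡 n) (⊤ : ℕ∞) (d j) (d j).source)
    (hsm_d' : ∀ j, ContMDiffOn (𝓡 n) (𝓡 n) (⊤ : ℕ∞) (d j).symm (d j).target)
    (hcov_d : (⋃ j, (d j).source) = univ)
    (f : N → M) (hf : IsOpenSmoothEmbedding n f) :
    @Continuous _ _
        (patchTop n Ψ T M ⊤ e hsmₑ hsmₑ' (fun _ => subset_univ _))
        (patchTop n Ψ T N ⊤ d hsm_d hsm_d' (fun _ => subset_univ _))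
        (fun s => Ψ.res N (fun x _ => Set.mem_univ (f x))
          (Ψ.pull N M f hf ⊤ s)) ∧
      (Function.Surjective f →
        @IsHomeomorph _ _
          (patchTop n Ψ T M ⊤ e hsmₑ hsmₑ' (fun _ => subset_univ _))
          (patchTop n Ψ T N ⊤ d hsm_d hsm_d' (fun _ => subset_univ _))
          (fun s => Ψ.res N (fun x _ => Set.mem_univ (f x))
            (Ψ.pull N M f hf ⊤ s))) := by
  constructor
  · exact restriction_continuous_aux n Ψ T M N e hsmₑ hsmₑ' hcovₑ d hsm_d hsm_d' f hf
  intro hsurj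
  letI tM : TopologicalSpace (Ψ.sect M ⊤) :=
    patchTop n Ψ T M ⊤ e hsmₑ hsmₑ' (fun _ => subset_univ _)
  letI tN : TopologicalSpace (Ψ.sect N ⊤) :=
    patchTop n Ψ T N ⊤ d hsm_d hsm_d' (fun _ => subset_univ _)
  have hbij : Function.Bijective f := ⟨hf.1, hsurj⟩
  have hg : IsOpenSmoothEmbedding n
      ⇑(IsLocalDiffeomorph.diffeomorphOfBijective hf.2 hbij).symm :=
    ⟨(IsLocalDiffeomorph.diffeomorphOfBijective hf.2 hbij).symm.toEquiv.injective,
      (IsLocalDiffeomorph.diffeomorphOfBijective hf.2 hbij).symm.isLocalDiffeomorph⟩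
  have hfgid : f ∘ ⇑(IsLocalDiffeomorph.diffeomorphOfBijective hf.2 hbij).symm = id :=
    funext fun x => (IsLocalDiffeomorph.diffeomorphOfBijective hf.2 hbij).apply_symm_apply x
  have hgfid : ⇑(IsLocalDiffeomorph.diffeomorphOfBijective hf.2 hbij).symm ∘ f = id :=
    funext fun x => (IsLocalDiffeomorph.diffeomorphOfBijective hf.2 hbij).symm_apply_apply x
  have hfg : IsOpenSmoothEmbedding n
      (f ∘ ⇑(IsLocalDiffeomorph.diffeomorphOfBijective hf.2 hbij).symm) := by
    rw [hfgid]; exact isOpenSmoothEmbedding_id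
  have hgf : IsOpenSmoothEmbedding n
      (⇑(IsLocalDiffeomorph.diffeomorphOfBijective hf.2 hbij).symm ∘ f) := by
    rw [hgfid]; exact isOpenSmoothEmbedding_id
  have hcont := restriction_continuous_aux n Ψ T M N e hsmₑ hsmₑ' hcovₑ d hsm_d hsm_d' f hf
  have hcont' := restriction_continuous_aux n Ψ T N M d hsm_d hsm_d' hcov_d e hsmₑ hsmₑ'
    (⇑(IsLocalDiffeomorph.diffeomorphOfBijective hf.2 hbij).symm) hg
  have hleft : Function.LeftInverse
      (fun t => Ψ.res M (fun x _ => Set.mem_univ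
          ((IsLocalDiffeomorph.diffeomorphOfBijective hf.2 hbij).symm x))
        (Ψ.pull M N (⇑(IsLocalDiffeomorph.diffeomorphOfBijective hf.2 hbij).symm) hg ⊤ t))
      (fun s => Ψ.res N (fun x _ => Set.mem_univ (f x)) (Ψ.pull N M f hf ⊤ s)) := by
    intro s
    have e1 := Ψ.pull_res M N (⇑(IsLocalDiffeomorph.diffeomorphOfBijective hf.2 hbij).symm)
      hg (U := ⟨f ⁻¹' (((⊤ : Opens M) : Set M)), (⊤ : Opens M).isOpen.preimage hf.continuous⟩)
      (V := (⊤ : Opens N)) (fun x _ => Set.mem_univ (f x)) (Ψ.pull N M f hf ⊤ s)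
    have e2 := Ψ.pull_comp M N M
      (⇑(IsLocalDiffeomorph.diffeomorphOfBijective hf.2 hbij).symm) f hg hf hfg ⊤ s
    show Ψ.res M _ (Ψ.pull M N _ hg ⊤ (Ψ.res N _ (Ψ.pull N M f hf ⊤ s))) = s
    rw [e1, e2]
    simp only [Ψ.res_comp]
    exact res_pull_eq_id Ψ _ hfgid hfg _ s
  have hright : Function.RightInverse
      (fun t => Ψ.res M (fun x _ => Set.mem_univ
          ((IsLocalDiffeomorph.diffeomorphOfBijective hf.2 hbij).symm x))
        (Ψ.pull M N (⇑(IsLocalDiffeomorph.diffeomorphOfBijective hf.2 hbij).symm) hg ⊤ t))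
      (fun s => Ψ.res N (fun x _ => Set.mem_univ (f x)) (Ψ.pull N M f hf ⊤ s)) := by
    intro t
    have e1 := Ψ.pull_res N M f hf
      (U := ⟨(⇑(IsLocalDiffeomorph.diffeomorphOfBijective hf.2 hbij).symm) ⁻¹'
          (((⊤ : Opens N) : Set N)), (⊤ : Opens N).isOpen.preimage hg.continuous⟩)
      (V := (⊤ : Opens M))
      (fun x _ => Set.mem_univ
        ((IsLocalDiffeomorph.diffeomorphOfBijective hf.2 hbij).symm x))
      (Ψ.pull M N (⇑(IsLocalDiffeomorph.diffeomorphOfBijective hf.2 hbij).symm) hg ⊤ t)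
    have e2 := Ψ.pull_comp N M N f
      (⇑(IsLocalDiffeomorph.diffeomorphOfBijective hf.2 hbij).symm) hf hg hgf ⊤ t
    show Ψ.res N _ (Ψ.pull N M f hf ⊤ (Ψ.res M _ (Ψ.pull M N _ hg ⊤ t))) = t
    rw [e1, e2]
    simp only [Ψ.res_comp]
    exact res_pull_eq_id Ψ _ hgfid hgf _ t
  exact Homeomorph.isHomeomorph
    ⟨⟨_, _, hleft, hright⟩,
      restriction_continuous_aux n Ψ T M N e hsmₑ hsmₑ' hcovₑ d hsm_d hsm_d' f hf, hcont'⟩
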